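/- Let Δ be a full-dimensional reflexive Delzant polytope in t*, let F be a facet of Δ supported on the hyperplane {w ∈ t* | ⟨w, ν⟩ = -1} with primitive inward normal ν ∈ ℓ, let v be a vertex of Δ lying in F, and let α_1, …, α_d ∈ ℓ* be the weights of v ordered so that F ⊂ v + R_{≥0}⟨α_1,…,α_{d-1}⟩. Then ⟨α_d, ν⟩ = 1. Moreover, if e is the edge of Δ incident to v not contained in F, then there exists a positive integer t_max such that e = {v + t α_d | 0 ≤ t ≤ t_max}. -/

import Mathlib

open Set

noncomputable section

variable {E : Type*} [NormedAddCommGroup E] [InnerProductSpace ℝ E]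

/-- Real inner-product pairing between `t*` and `t` (identified via the inner product). -/
def pairing (x y : E) : ℝ := inner ℝ x y

/-- `F` is a face of `Δ`: it is cut out by a supporting linear functional.
(The improper face `Δ` itself is obtained with the zero functional.) -/
def IsFaceOf (F Δ : Set E) : Prop :=
  ∃ (ν : E) (c : ℝ), (∀ w ∈ Δ, c ≤ pairing ν w) ∧ F = {w ∈ Δ | pairing ν w = c}

/-- `v` is a vertex of `Δ`. -/
def IsVertexOf (v : E) (Δ : Set E) : Prop := IsFaceOf {v} Δ

/-- The segment from `v` to `v'` is an edge of `Δ`. -/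
def IsEdgeOf (v v' : E) (Δ : Set E) : Prop := v ≠ v' ∧ IsFaceOf (segment ℝ v v') Δ

/-- `F` is a facet (codimension-one face) of `Δ`. -/
def IsFacetOf (F Δ : Set E) : Prop :=
  IsFaceOf F Δ ∧ Module.finrank ℝ (vectorSpan ℝ F) + 1 = Module.finrank ℝ E

/-- `x` is a primitive vector of the lattice `L`. -/
def IsPrimitiveIn (L : Set E) (x : E) : Prop :=
  x ∈ L ∧ x ≠ 0 ∧ ∀ n : ℕ, 1 < n → (n : ℝ)⁻¹ • x ∉ L

/-- `α` lists the weights (primitive edge-direction vectors) of the vertex `v` of `Δ`: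
they are primitive, they form a `ℤ`-basis of the lattice `L`, and the edges of `Δ`
incident to `v` point in exactly these directions (Delzant/smoothness condition at `v`). -/
def HasWeights (L : Set E) (Δ : Set E) (v : E) {d : ℕ} (α : Fin d → E) : Prop :=
  (∀ j, IsPrimitiveIn L (α j)) ∧
  (∀ x, x ∈ L ↔ ∃ m : Fin d → ℤ, x = ∑ j, (m j : ℝ) • α j) ∧
  (∀ v', IsEdgeOf v v' Δ ↔ ∃ j, ∃ t : ℝ, 0 < t ∧ v' = v + t • α j)

/-- `Δ` is a Delzant (simple and smooth) polytope w.r.t. the lattice `L`, of dimension `d`: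
every vertex has a family of weights as above. -/
def IsDelzant (L : Set E) (d : ℕ) (Δ : Set E) : Prop :=
  ∀ v, IsVertexOf v Δ → ∃ α : Fin d → E, HasWeights L Δ v α

/-- `Δ` is a reflexive polytope w.r.t. the lattice `L`: all vertices are lattice points and
in its (minimal) facet representation all inward normals are primitive lattice vectors
with all constants equal to `-1`. -/
def IsReflexive (L : Set E) (Δ : Set E) : Prop :=
  (∀ v, IsVertexOf v Δ → v ∈ L) ∧
  ∃ (l : ℕ) (ν : Fin l → E), (∀ i, IsPrimitiveIn L (ν i)) ∧
    (Δ = ⋂ i, {w | -1 ≤ pairing (ν i) w}) ∧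
    (∀ i, IsFacetOf {w ∈ Δ | pairing (ν i) w = -1} Δ)

/-- The standard full-rank lattice `ℤ^d ⊂ ℝ^d`. -/
def stdLattice (d : ℕ) : Set (EuclideanSpace ℝ (Fin d)) := {x | ∀ i, ∃ n : ℤ, x i = n}

lemma IsFaceOf.subset {B Δ : Set E} (h : IsFaceOf B Δ) : B ⊆ Δ := by
  obtain ⟨g, c, _, rfl⟩ := h; exact sep_subset _ _

lemma IsFaceOf.isExtreme {B Δ : Set E} (h : IsFaceOf B Δ) : IsExtreme ℝ Δ B := by
  obtain ⟨g, c, hg, rfl⟩ := h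
  refine ⟨sep_subset _ _, ?_⟩
  rintro x₁ h₁ x₂ h₂ x ⟨hxΔ, hxc⟩ ⟨a, b, ha, hb, hab, heq⟩
  have e1 : a * pairing g x₁ + b * pairing g x₂ = c := by
    rw [← hxc, ← heq]
    simp [inner_add_right, real_inner_smul_right, pairing]
  have c₁ := hg x₁ h₁
  have c₂ := hg x₂ h₂
  have e2 : a * (pairing g x₁ - c) + b * (pairing g x₂ - c) = 0 := by
    linear_combination e1 - c * hab
  have n₁ : 0 ≤ a * (pairing g x₁ - c) := mul_nonneg ha.le (by linarith)
  have n₂ : 0 ≤ b * (pairing g x₂ - c) := mul_nonneg hb.le (by linarith)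
  have z₁ : a * (pairing g x₁ - c) = 0 := by linarith
  have z₂ : b * (pairing g x₂ - c) = 0 := by linarith
  have p₁ : pairing g x₁ = c := by
    rcases mul_eq_zero.mp z₁ with h | h
    · exact absurd h ha.ne'
    · linarith
  have p₂ : pairing g x₂ = c := by
    rcases mul_eq_zero.mp z₂ with h | h
    · exact absurd h hb.ne'
    · linarith
  exact ⟨h₁, p₁⟩

lemma IsVertexOf.mem {v : E} {Δ : Set E} (h : IsVertexOf v Δ) : v ∈ Δ := h.subset rfl

lemma IsVertexOf.extremePoint {v : E} {Δ : Set E} (h : IsVertexOf v Δ) :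
    v ∈ Δ.extremePoints ℝ := isExtreme_singleton.mp h.isExtreme

lemma pairing_add_right (x y z : E) : pairing x (y + z) = pairing x y + pairing x z :=
  inner_add_right _ _ _
lemma pairing_smul_right (x y : E) (t : ℝ) : pairing x (t • y) = t * pairing x y :=
  real_inner_smul_right _ _ _
lemma pairing_sub_right (x y z : E) : pairing x (y - z) = pairing x y - pairing x z :=
  inner_sub_right _ _ _
lemma pairing_neg_right (x y : E) : pairing x (-y) = -pairing x y := inner_neg_right _ _
lemma pairing_zero_right (x : E) : pairing x 0 = 0 := inner_zero_right _
lemma pairing_sum_left {ι : Type*} (s : Finset ι) (f : ι → E) (x : E) :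
    pairing (∑ i ∈ s, f i) x = ∑ i ∈ s, pairing (f i) x := sum_inner _ _ _
lemma pairing_sum_right {ι : Type*} (s : Finset ι) (f : ι → ℝ) (g : ι → E) (x : E) :
    pairing x (∑ i ∈ s, f i • g i) = ∑ i ∈ s, f i * pairing x (g i) := by
  rw [pairing, inner_sum]; exact Finset.sum_congr rfl fun i _ => real_inner_smul_right _ _ _

open Finset in
lemma eps_step {l : ℕ} (νs : Fin l → E) (Δ : Set E)
    (hΔ : Δ = ⋂ i, {w | -1 ≤ pairing (νs i) w}) {p : E} (hp : p ∈ Δ) (z : E)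
    (hz : ∀ i, pairing (νs i) p = -1 → 0 ≤ pairing (νs i) z) :
    ∃ ε : ℝ, 0 < ε ∧ p + ε • z ∈ Δ := by
  classical
  have hpΔ : ∀ i, -1 ≤ pairing (νs i) p := by
    rw [hΔ] at hp; exact fun i => mem_iInter.mp hp i
  set S : Finset (Fin l) := Finset.univ.filter (fun i => pairing (νs i) z < 0) with hS
  have key : ∀ i ∈ S, 0 < (pairing (νs i) p + 1) / (-(pairing (νs i) z)) := by
    intro i hi
    have hzi : pairing (νs i) z < 0 := (Finset.mem_filter.mp hi).2
    have hne : pairing (νs i) p ≠ -1 := fun h => absurd (hz i h) (not_le.mpr hzi)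
    have : -1 < pairing (νs i) p := lt_of_le_of_ne (hpΔ i) (Ne.symm hne)
    exact div_pos (by linarith) (by linarith)
  by_cases hSne : S.Nonempty
  · set ε := S.inf' hSne (fun i => (pairing (νs i) p + 1) / (-(pairing (νs i) z))) with hε
    have hεpos : 0 < ε := (Finset.lt_inf'_iff _).mpr key
    refine ⟨ε, hεpos, ?_⟩
    rw [hΔ, mem_iInter]
    intro i
    show -1 ≤ pairing (νs i) (p + ε • z)
    by_cases hzi : pairing (νs i) z < 0
    · have hiS : i ∈ S := Finset.mem_filter.mpr ⟨Finset.mem_univ i, hzi⟩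
      have hle : ε ≤ (pairing (νs i) p + 1) / (-(pairing (νs i) z)) := Finset.inf'_le _ hiS
      have := (le_div_iff₀ (by linarith : (0:ℝ) < -(pairing (νs i) z))).mp hle
      rw [pairing_add_right, pairing_smul_right]
      nlinarith
    · push_neg at hzi
      have := hpΔ i
      rw [pairing_add_right, pairing_smul_right]
      nlinarith
  · refine ⟨1, one_pos, ?_⟩
    rw [hΔ, mem_iInter]
    intro i
    have hzi : 0 ≤ pairing (νs i) z := by
      by_contra h
      exact hSne ⟨i, Finset.mem_filter.mpr ⟨Finset.mem_univ i, not_le.mp h⟩⟩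
    show -1 ≤ pairing (νs i) (p + (1:ℝ) • z)
    rw [pairing_add_right, pairing_smul_right]
    have := hpΔ i
    nlinarith

lemma active_singleton {l : ℕ} (νs : Fin l → E) (Δ : Set E)
    (hΔ : Δ = ⋂ i, {w | -1 ≤ pairing (νs i) w}) {p : E} (hp : p ∈ Δ.extremePoints ℝ) :
    {w ∈ Δ | ∀ i, pairing (νs i) p = -1 → pairing (νs i) w = -1} = {p} := by
  ext w
  simp only [mem_setOf_eq, mem_singleton_iff]
  constructor
  · rintro ⟨hwΔ, hw⟩
    by_contra hne
    obtain ⟨ε, hε, hq⟩ := eps_step νs Δ hΔ hp.1 (p - w)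
      (fun i hi => by rw [pairing_sub_right, hi, hw i hi]; norm_num)
    set a : ℝ := (1 + ε)⁻¹ with ha
    have hapos : 0 < a := by positivity
    have hmem : p ∈ openSegment ℝ (p + ε • (p - w)) w := by
      have h1ε : (1 : ℝ) + ε ≠ 0 := by positivity
      refine ⟨a, ε * a, hapos, by positivity, by rw [ha]; field_simp, ?_⟩
      match_scalars <;> (rw [ha]; field_simp) <;> try ring
    obtain ⟨-, hwp⟩ := (mem_extremePoints.mp hp).2 _ hq _ hwΔ hmem
    exact hne hwp
  · rintro rfl
    exact ⟨hp.1, fun i hi => hi⟩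

open Finset in
lemma vertex_of_active_singleton {l : ℕ} (νs : Fin l → E) (Δ : Set E)
    (hΔ : Δ = ⋂ i, {w | -1 ≤ pairing (νs i) w}) {p : E} (hp : p ∈ Δ.extremePoints ℝ) :
    IsVertexOf p Δ := by
  classical
  have hpΔ : ∀ w ∈ Δ, ∀ i, -1 ≤ pairing (νs i) w := by
    intro w hw i; rw [hΔ] at hw; exact mem_iInter.mp hw i
  set I : Finset (Fin l) := Finset.univ.filter (fun i => pairing (νs i) p = -1) with hI
  refine ⟨∑ i ∈ I, νs i, -(I.card : ℝ), ?_, ?_⟩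
  · intro w hw
    rw [pairing_sum_left]
    calc -(I.card : ℝ) = ∑ _i ∈ I, (-1 : ℝ) := by simp
    _ ≤ ∑ i ∈ I, pairing (νs i) w := Finset.sum_le_sum fun i _ => hpΔ w hw i
  · rw [← active_singleton νs Δ hΔ hp]
    ext w
    simp only [mem_setOf_eq]
    constructor
    · rintro ⟨hwΔ, hw⟩
      refine ⟨hwΔ, ?_⟩
      rw [pairing_sum_left]
      rw [Finset.sum_congr rfl (fun i hi => hw i (Finset.mem_filter.mp hi).2)]
      simp [hI]
    · rintro ⟨hwΔ, hw⟩
      refine ⟨hwΔ, fun i hi => ?_⟩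
      have hle : ∀ j ∈ I, (-1 : ℝ) ≤ pairing (νs j) w := fun j _ => hpΔ w hwΔ j
      have hsum : ∑ _j ∈ I, (-1 : ℝ) = ∑ j ∈ I, pairing (νs j) w := by
        rw [← pairing_sum_left, hw]; simp
      have := (Finset.sum_eq_sum_iff_of_le hle).mp hsum
      exact (this i (Finset.mem_filter.mpr ⟨Finset.mem_univ i, hi⟩)).symm

/-- The subspace of directions orthogonal to all constraints active at `u`. -/
def Wsub {l : ℕ} (νs : Fin l → E) (A : Fin l → Prop) (u : E) : Submodule ℝ E where
  carrier := {w | ∀ i, A i → pairing (νs i) u = 0 → pairing (νs i) w = 0}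
  zero_mem' := fun i _ _ => pairing_zero_right _
  add_mem' := by
    intro x y hx hy i hA h0
    rw [pairing_add_right, hx i hA h0, hy i hA h0]; ring
  smul_mem' := by
    intro c x hx i hA h0
    rw [pairing_smul_right, hx i hA h0]; ring

lemma mem_Wsub_self {l : ℕ} (νs : Fin l → E) (A : Fin l → Prop) (u : E) : u ∈ Wsub νs A u :=
  fun _ _ h0 => h0

open Module in
lemma descent [FiniteDimensional ℝ E] {l : ℕ} (νs : Fin l → E) (A : Fin l → Prop) (ν : E)
    (hptd : ∀ z : E, (∀ i, A i → pairing (νs i) z = 0) → z = 0) :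
    ∀ (N : ℕ) (u : E), finrank ℝ (Wsub νs A u) ≤ N →
      (∀ i, A i → 0 ≤ pairing (νs i) u) → 0 < pairing ν u →
      ∃ u' : E, (∀ i, A i → 0 ≤ pairing (νs i) u') ∧ 0 < pairing ν u' ∧
        ∀ w : E, w ∈ Wsub νs A u' → ∃ s : ℝ, w = s • u' := by
  classical
  have conclude : ∀ u : E, 0 < pairing ν u → finrank ℝ (Wsub νs A u) ≤ 1 →
      ∀ w : E, w ∈ Wsub νs A u → ∃ s : ℝ, w = s • u := by
    intro u hb hr w hw
    have hu0 : u ≠ 0 := by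
      rintro rfl; rw [pairing, inner_zero_right] at hb; exact lt_irrefl _ hb
    have husub : Submodule.span ℝ {u} ≤ Wsub νs A u := by
      rw [Submodule.span_le, singleton_subset_iff]; exact mem_Wsub_self νs A u
    have heq := Submodule.eq_of_le_of_finrank_le husub
      (by rw [finrank_span_singleton hu0]; exact hr)
    rw [← heq] at hw
    obtain ⟨s, hs⟩ := Submodule.mem_span_singleton.mp hw
    exact ⟨s, hs.symm⟩
  intro N
  induction N with
  | zero =>
    intro u hr ha hb
    exact ⟨u, ha, hb, fun w hw => conclude u hb (le_trans hr (by norm_num)) w hw⟩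
  | succ N ih =>
    intro u hr ha hb
    by_cases h1 : finrank ℝ (Wsub νs A u) ≤ 1
    · exact ⟨u, ha, hb, fun w hw => conclude u hb h1 w hw⟩
    push_neg at h1
    have hu0 : u ≠ 0 := by
      rintro rfl; rw [pairing, inner_zero_right] at hb; exact lt_irrefl _ hb
    have hνu : pairing ν u ≠ 0 := hb.ne'
    -- find w in Wsub u outside the line through u
    obtain ⟨w, hwW, hwns⟩ : ∃ w ∈ Wsub νs A u, w ∉ Submodule.span ℝ {u} := by
      by_contra hc
      push_neg at hc
      have hle : Wsub νs A u ≤ Submodule.span ℝ {u} := hc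
      have := Submodule.finrank_mono hle
      rw [finrank_span_singleton hu0] at this
      omega
    set c : ℝ := pairing ν w / pairing ν u with hc
    set w' : E := w - c • u with hw'def
    have hνw' : pairing ν w' = 0 := by
      rw [hw'def, pairing_sub_right, pairing_smul_right, hc]
      field_simp
      ring
    have hw'W : w' ∈ Wsub νs A u :=
      Submodule.sub_mem _ hwW (Submodule.smul_mem _ _ (mem_Wsub_self νs A u))
    have hw'ns : w' ∉ Submodule.span ℝ {u} := by
      intro h
      apply hwns
      have : w = w' + c • u := by rw [hw'def]; abel
      rw [this]
      exact Submodule.add_mem _ h (Submodule.smul_mem _ _ (Submodule.mem_span_singleton_self u))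
    have hw'0 : w' ≠ 0 := by
      rintro h
      exact hw'ns (h ▸ Submodule.zero_mem _)
    obtain ⟨i₀, hAi₀, hi₀⟩ : ∃ i, A i ∧ pairing (νs i) w' ≠ 0 := by
      by_contra hcon
      push_neg at hcon
      exact hw'0 (hptd w' fun i hA => hcon i hA)
    -- the main step, for a direction with a strictly negative active pairing
    have step : ∀ z : E, z ∈ Wsub νs A u → pairing ν z = 0 →
        ∀ i₁, A i₁ → pairing (νs i₁) z < 0 →
        ∃ u' : E, (∀ i, A i → 0 ≤ pairing (νs i) u') ∧ 0 < pairing ν u' ∧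
          ∀ w : E, w ∈ Wsub νs A u' → ∃ s : ℝ, w = s • u' := by
      intro z hzW hνz i₁ hAi₁ hneg
      set S : Finset (Fin l) := Finset.univ.filter (fun i => A i ∧ pairing (νs i) z < 0) with hS
      have hSne : S.Nonempty := ⟨i₁, Finset.mem_filter.mpr ⟨Finset.mem_univ _, hAi₁, hneg⟩⟩
      have hupos : ∀ i ∈ S, 0 < pairing (νs i) u := by
        intro i hi
        obtain ⟨hAi, hzi⟩ := (Finset.mem_filter.mp hi).2
        rcases lt_or_eq_of_le (ha i hAi) with h | h
        · exact h
        · exact absurd (hzW i hAi h.symm) hzi.ne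
      set t : ℝ := S.inf' hSne (fun i => pairing (νs i) u / (-(pairing (νs i) z))) with ht
      have htpos : 0 < t := by
        refine (Finset.lt_inf'_iff _).mpr fun i hi => ?_
        have hzi : pairing (νs i) z < 0 := (Finset.mem_filter.mp hi).2.2
        exact div_pos (hupos i hi) (by linarith)
      set u' : E := u + t • z with hu'def
      have hval : ∀ x : E, pairing x u' = pairing x u + t * pairing x z := by
        intro x; rw [hu'def, pairing_add_right, pairing_smul_right]
      have ha' : ∀ i, A i → 0 ≤ pairing (νs i) u' := by
        intro i hAi
        rw [hval]
        by_cases hzi : pairing (νs i) z < 0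
        · have hiS : i ∈ S := Finset.mem_filter.mpr ⟨Finset.mem_univ _, hAi, hzi⟩
          have hle : t ≤ pairing (νs i) u / (-(pairing (νs i) z)) := Finset.inf'_le _ hiS
          have := (le_div_iff₀ (by linarith : (0:ℝ) < -(pairing (νs i) z))).mp hle
          nlinarith
        · push_neg at hzi
          have := ha i hAi
          nlinarith
      have hb' : 0 < pairing ν u' := by rw [hval, hνz]; linarith
      obtain ⟨im, himS, him⟩ := S.exists_mem_eq_inf' hSne
        (fun i => pairing (νs i) u / (-(pairing (νs i) z)))
      obtain ⟨hAim, hzim⟩ := (Finset.mem_filter.mp himS).2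
      have hu'im : pairing (νs im) u' = 0 := by
        have htm : t = pairing (νs im) u / (-(pairing (νs im) z)) := ht.trans him
        rw [hval, htm]
        field_simp [hzim.ne]
        ring
      have hle : Wsub νs A u' ≤ Wsub νs A u := by
        intro x hx i hAi h0
        have hzi : pairing (νs i) z = 0 := hzW i hAi h0
        exact hx i hAi (by rw [hval, h0, hzi]; ring)
      have hlt : Wsub νs A u' < Wsub νs A u := by
        refine lt_of_le_of_ne hle fun hEq => ?_
        have hzW' : z ∈ Wsub νs A u' := hEq ▸ hzW
        exact absurd (hzW' im hAim hu'im) hzim.ne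
      have hr' : finrank ℝ (Wsub νs A u') ≤ N := by
        have := Submodule.finrank_lt_finrank_of_lt hlt
        omega
      exact ih u' hr' ha' hb'
    rcases hi₀.lt_or_gt with hlt | hgt
    · exact step w' hw'W hνw' i₀ hAi₀ hlt
    · refine step (-w') (Submodule.neg_mem _ hw'W) (by rw [pairing_neg_right, hνw']; ring)
        i₀ hAi₀ ?_
      rw [pairing_neg_right]; linarith

open Module in
lemma exists_edge_off [FiniteDimensional ℝ E] {l : ℕ} (νs : Fin l → E) (Δ : Set E)
    (hΔ : Δ = ⋂ i, {w | -1 ≤ pairing (νs i) w}) (hconv : Convex ℝ Δ) (hcomp : IsCompact Δ)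
    {v : E} (hv : IsVertexOf v Δ) (ν : E) (hvν : pairing ν v = -1) :
    ∃ v' : E, IsEdgeOf v v' Δ ∧ -1 < pairing ν v' := by
  classical
  have hvΔ : v ∈ Δ := hv.mem
  have hvex : v ∈ Δ.extremePoints ℝ := hv.extremePoint
  set A : Fin l → Prop := fun i => pairing (νs i) v = -1 with hA
  -- pointedness
  have hptd : ∀ z : E, (∀ i, A i → pairing (νs i) z = 0) → z = 0 := by
    intro z hz
    obtain ⟨ε, hε, hq⟩ := eps_step νs Δ hΔ hvΔ z (fun i hi => le_of_eq (hz i hi).symm)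
    have hmem : v + ε • z ∈ ({w ∈ Δ | ∀ i, pairing (νs i) v = -1 → pairing (νs i) w = -1}) := by
      refine ⟨hq, fun i hi => ?_⟩
      rw [pairing_add_right, pairing_smul_right, hi, hz i hi]
      ring
    rw [active_singleton νs Δ hΔ hvex] at hmem
    have : ε • z = 0 := by
      have := hmem
      rw [mem_singleton_iff] at this
      have h2 : v + ε • z - v = 0 := by rw [this]; abel
      rw [← h2]; abel
    rcases smul_eq_zero.mp this with h | h
    · exact absurd h hε.ne'
    · exact h
  -- initial direction: -v
  have ha₀ : ∀ i, A i → 0 ≤ pairing (νs i) (-v) := by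
    intro i hi; rw [pairing_neg_right, hi]; norm_num
  have hb₀ : 0 < pairing ν (-v) := by rw [pairing_neg_right, hvν]; norm_num
  obtain ⟨u, hau, hbu, hWu⟩ := descent νs A ν hptd (finrank ℝ E) (-v)
    (Submodule.finrank_le _) ha₀ hb₀
  have hu0 : u ≠ 0 := by
    rintro rfl; rw [pairing, inner_zero_right] at hbu; exact lt_irrefl _ hbu
  -- the interval in direction u
  set T : Set ℝ := {t : ℝ | 0 ≤ t ∧ v + t • u ∈ Δ} with hT
  have hT0 : (0 : ℝ) ∈ T := ⟨le_refl 0, by simpa using hvΔ⟩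
  have hTbdd : BddAbove T := by
    obtain ⟨R, hR⟩ := isBounded_iff_forall_norm_le.mp hcomp.isBounded
    refine ⟨(R + ‖v‖) / ‖u‖, fun t ht => ?_⟩
    have h1 : ‖v + t • u‖ ≤ R := hR _ ht.2
    have h2 : t * ‖u‖ = ‖(v + t • u) - v‖ := by
      rw [add_sub_cancel_left, norm_smul, Real.norm_eq_abs, abs_of_nonneg ht.1]
    have h3 : ‖(v + t • u) - v‖ ≤ R + ‖v‖ := by
      calc ‖(v + t • u) - v‖ ≤ ‖v + t • u‖ + ‖v‖ := norm_sub_le _ _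
      _ ≤ R + ‖v‖ := by linarith
    rw [le_div_iff₀ (norm_pos_iff.mpr hu0)]
    linarith
  have hTclosed : IsClosed T := by
    have : T = Ici (0:ℝ) ∩ ((fun t : ℝ => v + t • u) ⁻¹' Δ) := by
      ext t; simp [hT, Set.mem_Ici]
    rw [this]
    exact isClosed_Ici.inter (hcomp.isClosed.preimage
      (continuous_const.add (continuous_id.smul continuous_const)))
  set t₀ : ℝ := sSup T with ht₀
  have ht₀T : t₀ ∈ T := hTclosed.csSup_mem ⟨0, hT0⟩ hTbdd
  have ht₀pos : 0 < t₀ := by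
    obtain ⟨ε, hε, hq⟩ := eps_step νs Δ hΔ hvΔ u (fun i hi => hau i hi)
    have : ε ∈ T := ⟨hε.le, hq⟩
    exact lt_of_lt_of_le hε (le_csSup hTbdd this)
  set v' : E := v + t₀ • u with hv'
  have hv'Δ : v' ∈ Δ := ht₀T.2
  have hne : v ≠ v' := by
    intro h
    have : t₀ • u = 0 := by rw [hv'] at h; have := h.symm; rwa [add_eq_left] at this
    rcases smul_eq_zero.mp this with h' | h'
    · exact ht₀pos.ne' h'
    · exact hu0 h'
  have hΔmem : ∀ w ∈ Δ, ∀ i, -1 ≤ pairing (νs i) w := by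
    intro w hw i; rw [hΔ] at hw; exact mem_iInter.mp hw i
  -- the exposing functional for the edge
  set Z : Finset (Fin l) :=
    Finset.univ.filter (fun i => pairing (νs i) v = -1 ∧ pairing (νs i) u = 0) with hZ
  have hseg : segment ℝ v v' = {w ∈ Δ | pairing (∑ i ∈ Z, νs i) w = -(Z.card : ℝ)} := by
    ext w
    constructor
    · intro hw
      obtain ⟨θ, hθ, hweq⟩ := (segment_eq_image' ℝ v v') ▸ hw
      have hwΔ : w ∈ Δ := hconv.segment_subset hvΔ hv'Δ hw
      refine ⟨hwΔ, ?_⟩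
      rw [pairing_sum_left]
      have hweq' : w = v + (θ * t₀) • u := by
        rw [← hweq]
        simp only [hv', add_sub_cancel_left, smul_smul]
      have hcongr : ∀ i ∈ Z, pairing (νs i) w = -1 := by
        intro i hi
        obtain ⟨hiv, hiu⟩ := (Finset.mem_filter.mp hi).2
        rw [hweq', pairing_add_right, pairing_smul_right, hiv, hiu]
        ring
      rw [Finset.sum_congr rfl hcongr]
      simp
    · rintro ⟨hwΔ, hwc⟩
      have hall : ∀ i ∈ Z, pairing (νs i) w = -1 := by
        have hle : ∀ i ∈ Z, (-1 : ℝ) ≤ pairing (νs i) w := fun i _ => hΔmem w hwΔ i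
        have hsum : ∑ _i ∈ Z, (-1 : ℝ) = ∑ i ∈ Z, pairing (νs i) w := by
          rw [← pairing_sum_left, hwc]; simp
        intro i hi
        exact ((Finset.sum_eq_sum_iff_of_le hle).mp hsum i hi).symm
      have hwv : w - v ∈ Wsub νs A u := by
        intro i hAi h0
        have hiZ : i ∈ Z := Finset.mem_filter.mpr ⟨Finset.mem_univ _, hAi, h0⟩
        rw [pairing_sub_right, hall i hiZ, hAi]
        ring
      obtain ⟨s, hs⟩ := hWu (w - v) hwv
      have hws : w = v + s • u := by rw [← hs]; abel
      have hs0 : 0 ≤ s := by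
        by_contra hsneg
        push_neg at hsneg
        have hsub : t₀ - s > 0 := by linarith
        set a : ℝ := t₀ / (t₀ - s) with haa
        set b : ℝ := -s / (t₀ - s) with hbb
        have hmem : v ∈ openSegment ℝ w v' := by
          refine ⟨a, b, div_pos ht₀pos hsub, div_pos (by linarith) hsub, ?_, ?_⟩
          · rw [haa, hbb]; field_simp; ring
          · rw [hws, hv', haa, hbb]
            match_scalars <;> field_simp <;> ring
        obtain ⟨hw1, -⟩ := (mem_extremePoints.mp hvex).2 _ hwΔ _ hv'Δ hmem
        have hsu : s • u = 0 := by
          have h2 : v + s • u = v := by rw [← hws, hw1]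
          have h3 := congrArg (fun x => x - v) h2
          simpa using h3
        rcases smul_eq_zero.mp hsu with h' | h'
        · exact absurd h' (by linarith)
        · exact hu0 h'
      have hst : s ≤ t₀ := by
        by_contra hgt
        push_neg at hgt
        have : s ∈ T := ⟨hs0, by rw [← hws]; exact hwΔ⟩
        exact absurd (le_csSup hTbdd this) (not_le.mpr hgt)
      rw [segment_eq_image' ℝ v v']
      refine ⟨s / t₀, ⟨by positivity, by rwa [div_le_one ht₀pos]⟩, ?_⟩
      simp only [hv', add_sub_cancel_left, smul_smul]
      rw [div_mul_cancel₀ _ ht₀pos.ne', ← hws]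
  refine ⟨v', ⟨hne, ∑ i ∈ Z, νs i, -(Z.card : ℝ), ?_, hseg⟩, ?_⟩
  · intro w hw
    rw [pairing_sum_left]
    calc -(Z.card : ℝ) = ∑ _i ∈ Z, (-1 : ℝ) := by simp
    _ ≤ ∑ i ∈ Z, pairing (νs i) w := Finset.sum_le_sum fun i _ => hΔmem w hw i
  · rw [hv', pairing_add_right, pairing_smul_right, hvν]
    nlinarith

lemma endpoint_extremePoint {v v' : E} {Δ : Set E} (hedge : IsEdgeOf v v' Δ) :
    v' ∈ Δ.extremePoints ℝ := by
  obtain ⟨hne, hface⟩ := hedge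
  have hext : IsExtreme ℝ Δ (segment ℝ v v') := hface.isExtreme
  have hseg : v' ∈ (segment ℝ v v').extremePoints ℝ := by
    refine ⟨right_mem_segment ℝ v v', ?_⟩
    intro x₁ hx₁ x₂ hx₂ hopen
    rw [segment_eq_image' ℝ v v'] at hx₁ hx₂
    obtain ⟨θ₁, hθ₁, hx₁eq⟩ := hx₁
    obtain ⟨θ₂, hθ₂, hx₂eq⟩ := hx₂
    obtain ⟨a, b, ha, hb, hab, heq⟩ := hopen
    have hvv : v' - v ≠ 0 := sub_ne_zero.mpr (Ne.symm hne)
    have h3 : (a * θ₁ + b * θ₂ - 1) • (v' - v) = (a • x₁ + b • x₂) - v' := by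
      rw [← hx₁eq, ← hx₂eq]
      match_scalars <;> linarith
    rw [heq, sub_self] at h3
    have hcoef : a * θ₁ + b * θ₂ - 1 = 0 := by
      rcases smul_eq_zero.mp h3 with h | h
      · exact h
      · exact absurd h hvv
    obtain ⟨hθ₁0, hθ₁1⟩ := hθ₁
    obtain ⟨hθ₂0, hθ₂1⟩ := hθ₂
    have hθ₁e : θ₁ = 1 := by nlinarith
    have hθ₂e : θ₂ = 1 := by nlinarith
    rw [← hx₁eq, hθ₁e]; simp
  exact hext.extremePoints_subset_extremePoints hseg

lemma endpoint_vertex {l : ℕ} (νs : Fin l → E) (Δ : Set E)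
    (hΔ : Δ = ⋂ i, {w | -1 ≤ pairing (νs i) w}) {v v' : E} (hedge : IsEdgeOf v v' Δ) :
    IsVertexOf v' Δ :=
  vertex_of_active_singleton νs Δ hΔ (endpoint_extremePoint hedge)

lemma pairing_zero_of_mem_span {s : Set E} {g : E} (h : ∀ x ∈ s, pairing g x = 0) {x : E}
    (hx : x ∈ Submodule.span ℝ s) : pairing g x = 0 := by
  induction hx using Submodule.span_induction with
  | mem y hy => exact h y hy
  | zero => exact pairing_zero_right g
  | add y z _ _ hy hz => rw [pairing_add_right, hy, hz]; ring
  | smul c y _ hy => rw [pairing_smul_right, hy]; ring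

lemma stdLattice_pairing_int {n : ℕ} {x y : EuclideanSpace ℝ (Fin n)}
    (hx : x ∈ stdLattice n) (hy : y ∈ stdLattice n) : ∃ m : ℤ, pairing x y = m := by
  choose a ha using hx
  choose b hb using hy
  refine ⟨∑ i, a i * b i, ?_⟩
  have : pairing x y = ∑ i, x i * y i := by
    simp [pairing, PiLp.inner_apply, RCLike.inner_apply, conj_trivial, mul_comm]
  rw [this]
  push_cast
  exact Finset.sum_congr rfl fun i _ => by rw [ha i, hb i]

lemma stdLattice_sub {n : ℕ} {x y : EuclideanSpace ℝ (Fin n)}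
    (hx : x ∈ stdLattice n) (hy : y ∈ stdLattice n) : x - y ∈ stdLattice n := by
  intro i
  obtain ⟨a, ha⟩ := hx i
  obtain ⟨b, hb⟩ := hy i
  exact ⟨a - b, by push_cast; rw [← ha, ← hb]; rfl⟩

lemma stdLattice_single {n : ℕ} (i : Fin n) : EuclideanSpace.single i (1:ℝ) ∈ stdLattice n := by
  intro j
  by_cases h : j = i
  · exact ⟨1, by rw [h]; simp [EuclideanSpace.single_apply]⟩
  · exact ⟨0, by simp [EuclideanSpace.single_apply, h]⟩

/-- Let `Δ` be a full-dimensional reflexive Delzant polytope in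
`t* = ℝ^(d+1)`, `F` a facet of `Δ` supported on `{w | ⟨w,ν⟩ = -1}` with primitive inward
normal `ν`, `v` a vertex of `Δ` lying in `F`, and `α 0, …, α d` the weights of `v` ordered
so that `F ⊆ v + ℝ≥0⟨α 0,…,α (d-1)⟩`.  Then `⟨α d, ν⟩ = 1`; moreover for any edge of `Δ`
incident to `v` and not contained in `F`, its other endpoint is `v + t_max • α d` for some
positive integer `t_max`. -/
theorem stmt2 (d : ℕ) (Δ : Set (EuclideanSpace ℝ (Fin (d + 1))))
    (hconv : Convex ℝ Δ) (hcomp : IsCompact Δ) (hfull : (interior Δ).Nonempty)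
    (hrefl : IsReflexive (stdLattice (d + 1)) Δ)
    (hdelz : IsDelzant (stdLattice (d + 1)) (d + 1) Δ)
    (ν : EuclideanSpace ℝ (Fin (d + 1))) (hν : IsPrimitiveIn (stdLattice (d + 1)) ν)
    (F : Set (EuclideanSpace ℝ (Fin (d + 1))))
    (hF : F = {w ∈ Δ | pairing ν w = -1})
    (hFacet : IsFacetOf F Δ)
    (hhalf : ∀ w ∈ Δ, -1 ≤ pairing ν w)
    (v : EuclideanSpace ℝ (Fin (d + 1))) (hv : IsVertexOf v Δ) (hvF : v ∈ F)
    (α : Fin (d + 1) → EuclideanSpace ℝ (Fin (d + 1)))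
    (hα : HasWeights (stdLattice (d + 1)) Δ v α)
    (horder : ∀ w ∈ F, ∃ t : Fin (d + 1) → ℝ,
      (∀ j, 0 ≤ t j) ∧ t (Fin.last d) = 0 ∧ w = v + ∑ j, t j • α j) :
    pairing ν (α (Fin.last d)) = 1 ∧
      ∀ v', IsEdgeOf v v' Δ → ¬ (segment ℝ v v' ⊆ F) →
        ∃ tmax : ℕ, 0 < tmax ∧ v' = v + (tmax : ℝ) • α (Fin.last d) := by
  classical
  obtain ⟨hαprim, hαlat, hαedge⟩ := hα
  obtain ⟨hvert_lat, l, νs, hνsprim, hΔeq, hfacets⟩ := hrefl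
  have hvmemF := hvF
  rw [hF] at hvmemF
  obtain ⟨hvΔ, hvν⟩ := hvmemF
  -- `α` is a basis
  have htop : ⊤ ≤ Submodule.span ℝ (Set.range α) := by
    rw [← (EuclideanSpace.basisFun (Fin (d+1)) ℝ).toBasis.span_eq]
    apply Submodule.span_le.mpr
    rintro x ⟨i, rfl⟩
    have hone : (EuclideanSpace.basisFun (Fin (d+1)) ℝ).toBasis i
        = EuclideanSpace.single i (1:ℝ) := by
      simp [EuclideanSpace.basisFun_apply]
    rw [hone]
    obtain ⟨m, hm⟩ := (hαlat _).mp (stdLattice_single i)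
    rw [hm]
    exact Submodule.sum_mem _ fun j _ =>
      Submodule.smul_mem _ _ (Submodule.subset_span ⟨j, rfl⟩)
  have hcard : Fintype.card (Fin (d+1)) = Module.finrank ℝ (EuclideanSpace ℝ (Fin (d+1))) := by
    simp [finrank_euclideanSpace]
  have li : LinearIndependent ℝ α := by
    have := (basisOfTopLeSpanOfCardEqFinrank α htop hcard).linearIndependent
    rwa [coe_basisOfTopLeSpanOfCardEqFinrank] at this
  have hcoef : ∀ c c' : Fin (d+1) → ℝ, ∑ j, c j • α j = ∑ j, c' j • α j → ∀ j, c j = c' j := by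
    intro c c' h j
    have h0 : ∑ jj, (c jj - c' jj) • α jj = 0 := by
      simp only [sub_smul]
      rw [Finset.sum_sub_distrib, h, sub_self]
    have := Fintype.linearIndependent_iff.mp li (fun jj => c jj - c' jj) h0 j
    linarith
  -- the first d weights span the facet direction space and pair to zero with ν
  set Ssub : Submodule ℝ (EuclideanSpace ℝ (Fin (d+1))) :=
    Submodule.span ℝ (Set.range (fun j : Fin d => α j.castSucc)) with hSsub
  have li' : LinearIndependent ℝ (fun j : Fin d => α j.castSucc) :=
    li.comp Fin.castSucc (Fin.castSucc_injective d)
  have hSd : Module.finrank ℝ Ssub = d := by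
    rw [hSsub, finrank_span_eq_card li']
    simp
  have hFS : vectorSpan ℝ F ≤ Ssub := by
    rw [vectorSpan_def]
    apply Submodule.span_le.mpr
    rintro p hp
    obtain ⟨w, hw, w', hw', rfl⟩ := hp
    obtain ⟨t, ht0, htl, hteq⟩ := horder w hw
    obtain ⟨t', ht0', htl', hteq'⟩ := horder w' hw'
    have hdiff : w -ᵥ w' = ∑ j, (t j - t' j) • α j := by
      rw [vsub_eq_sub, hteq, hteq']
      simp only [sub_smul]
      rw [Finset.sum_sub_distrib]
      abel
    show w -ᵥ w' ∈ Ssub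
    rw [hdiff, Fin.sum_univ_castSucc, htl, htl']
    simp only [sub_self, zero_smul, add_zero]
    exact Submodule.sum_mem _ fun j _ =>
      Submodule.smul_mem _ _ (Submodule.subset_span ⟨j, rfl⟩)
  have hfrF : Module.finrank ℝ (vectorSpan ℝ F) = d := by
    have h2 := hFacet.2
    rw [finrank_euclideanSpace] at h2
    simp only [Fintype.card_fin] at h2
    omega
  have hEqS : vectorSpan ℝ F = Ssub :=
    Submodule.eq_of_le_of_finrank_le hFS (by rw [hSd, hfrF])
  have hα0 : ∀ j : Fin (d+1), j ≠ Fin.last d → pairing ν (α j) = 0 := by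
    intro j hj
    obtain ⟨j', rfl⟩ := Fin.exists_castSucc_eq.mpr hj
    have hmem : α j'.castSucc ∈ Ssub := Submodule.subset_span ⟨j', rfl⟩
    rw [← hEqS, vectorSpan_def] at hmem
    refine pairing_zero_of_mem_span ?_ hmem
    rintro x ⟨w, hw, w', hw', rfl⟩
    rw [hF] at hw hw'
    show pairing ν (w -ᵥ w') = 0
    rw [vsub_eq_sub, pairing_sub_right, hw.2, hw'.2]
    ring
  -- the pairing of ν with the last weight is an integer m with m ∣ 1
  obtain ⟨m, hm⟩ := stdLattice_pairing_int hν.1 (hαprim (Fin.last d)).1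
  have hvlat : v ∈ stdLattice (d+1) := hvert_lat v hv
  obtain ⟨nn, hnn⟩ := (hαlat v).mp hvlat
  have hsum : pairing ν v = (nn (Fin.last d) : ℝ) * pairing ν (α (Fin.last d)) := by
    rw [hnn, pairing_sum_right]
    rw [Finset.sum_eq_single (Fin.last d)]
    · intro j _ hj
      rw [hα0 j hj]; ring
    · intro h; exact absurd (Finset.mem_univ _) h
  have hprod : (nn (Fin.last d) : ℝ) * (m : ℝ) = -1 := by
    rw [← hm, ← hsum, hvν]
  have hprodZ : nn (Fin.last d) * m = -1 := by exact_mod_cast hprod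
  have hmunit : m = 1 ∨ m = -1 := by
    have : IsUnit m := IsUnit.of_mul_eq_one (a := m) (-(nn (Fin.last d))) (by linarith [hprodZ]; )
    exact Int.isUnit_iff.mp this
  -- existence of an edge leaving the facet, to fix the sign
  obtain ⟨v₀, hedge₀, hgt₀⟩ := exists_edge_off νs Δ hΔeq hconv hcomp hv ν hvν
  obtain ⟨j₀, t₀, ht₀, hv₀⟩ := (hαedge v₀).mp hedge₀
  have hj₀ : j₀ = Fin.last d := by
    by_contra hj
    rw [hv₀, pairing_add_right, pairing_smul_right, hvν, hα0 j₀ hj] at hgt₀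
    simp at hgt₀
  have hk1 : pairing ν (α (Fin.last d)) = 1 := by
    rw [hj₀] at hv₀
    rw [hv₀, pairing_add_right, pairing_smul_right, hvν] at hgt₀
    have hkpos : 0 < pairing ν (α (Fin.last d)) := by
      rcases lt_or_ge 0 (pairing ν (α (Fin.last d))) with h | h
      · exact h
      · nlinarith
    rcases hmunit with h | h
    · rw [hm, h]; norm_num
    · rw [hm, h] at hkpos; norm_num at hkpos
  refine ⟨hk1, ?_⟩
  intro v' hedge hnsub
  obtain ⟨j, t, ht, hv'⟩ := (hαedge v').mp hedge
  have hv'Δ : v' ∈ Δ := hedge.2.subset (right_mem_segment ℝ v v')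
  have hj : j = Fin.last d := by
    by_contra hj
    apply hnsub
    intro w hw
    obtain ⟨a, b, ha, hb, hab, heq⟩ := hw
    have hwΔ : w ∈ Δ := hconv.segment_subset hvΔ hv'Δ ⟨a, b, ha, hb, hab, heq⟩
    rw [hF]
    refine ⟨hwΔ, ?_⟩
    have hpv' : pairing ν v' = -1 := by
      rw [hv', pairing_add_right, pairing_smul_right, hvν, hα0 j hj]
      ring
    rw [← heq, pairing_add_right, pairing_smul_right, pairing_smul_right, hvν, hpv']
    linarith
  rw [hj] at hv'
  -- the endpoint is a vertex, hence a lattice point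
  have hv'vert : IsVertexOf v' Δ := endpoint_vertex νs Δ hΔeq hedge
  have hv'lat : v' ∈ stdLattice (d+1) := hvert_lat v' hv'vert
  have hdifflat : v' - v ∈ stdLattice (d+1) := stdLattice_sub hv'lat hvlat
  obtain ⟨mm, hmm⟩ := (hαlat _).mp hdifflat
  have hdiff : v' - v = t • α (Fin.last d) := by rw [hv']; abel
  have hrep : ∑ jj, (if jj = Fin.last d then t else 0) • α jj = ∑ jj, (mm jj : ℝ) • α jj := by
    rw [← hmm, hdiff]
    simp [ite_smul]
  have htmm : t = (mm (Fin.last d) : ℝ) := by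
    have := hcoef _ _ hrep (Fin.last d)
    simpa using this
  have hmmpos : 0 < mm (Fin.last d) := by
    have : (0:ℝ) < (mm (Fin.last d) : ℝ) := htmm ▸ ht
    exact_mod_cast this
  refine ⟨(mm (Fin.last d)).toNat, by omega, ?_⟩
  have hcast : (((mm (Fin.last d)).toNat : ℕ) : ℝ) = ((mm (Fin.last d)) : ℝ) := by
    exact_mod_cast Int.toNat_of_nonneg hmmpos.le
  rw [hv', htmm, hcast]
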